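/- Let G be an edge-weighted graph with weights in [M] and let H be the 4-partite graph with parts A, B, C, A' (copies of V(G)), where each edge (u,v) of G of weight w induces edges (u_A, v_B), (u_B, v_C), (u_C, v_{A'}) each of weight w + 2M, plus vertices s, t with edges (s, u_{i,A}) and (u_{i,A'}, t) of weight 3iM for the i-th vertex u_i. Then for each i for which only vertices u_j with j ≥ i are connected to s and t, the shortest s-t path in H has weight (6i+6)M + w(Δ), where w(Δ) is the minimum weight of a triangle of G containing u_i, provided u_i lies in a triangle. -/

import Mathlib

open SimpleGraph

namespace Stmt15

variable {n : ℕ}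

def tl3 (M : ℕ) (i v : Fin n) : ℕ := if v = i then 0 else 3 * M

noncomputable def tl2 (M : ℕ) (G : SimpleGraph (Fin n)) (w : Sym2 (Fin n) → ℕ) (i u : Fin n) : ℕ :=
  sInf (insert (3 * M) {x | ∃ v, G.Adj u v ∧ x = w (s(u, v)) + tl3 M i v})

noncomputable def tl1 (M : ℕ) (G : SimpleGraph (Fin n)) (w : Sym2 (Fin n) → ℕ) (i u : Fin n) : ℕ :=
  sInf (insert (3 * M) {x | ∃ v, G.Adj u v ∧ x = w (s(u, v)) + tl2 M G w i v})

noncomputable def tl0 (M : ℕ) (G : SimpleGraph (Fin n)) (w : Sym2 (Fin n) → ℕ) (i u : Fin n) : ℕ :=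
  sInf (insert (3 * M) {x | ∃ v, G.Adj u v ∧ x = w (s(u, v)) + tl1 M G w i v})

lemma tl3_le (M : ℕ) (i v : Fin n) : tl3 M i v ≤ 3 * M := by
  unfold tl3; split <;> omega

lemma tl2_le (M : ℕ) (G : SimpleGraph (Fin n)) (w : Sym2 (Fin n) → ℕ) (i u : Fin n) :
    tl2 M G w i u ≤ 3 * M := Nat.sInf_le (Set.mem_insert _ _)

lemma tl1_le (M : ℕ) (G : SimpleGraph (Fin n)) (w : Sym2 (Fin n) → ℕ) (i u : Fin n) :
    tl1 M G w i u ≤ 3 * M := Nat.sInf_le (Set.mem_insert _ _)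

lemma tl0_le (M : ℕ) (G : SimpleGraph (Fin n)) (w : Sym2 (Fin n) → ℕ) (i u : Fin n) :
    tl0 M G w i u ≤ 3 * M := Nat.sInf_le (Set.mem_insert _ _)

lemma tl0_le' (M : ℕ) (G : SimpleGraph (Fin n)) (w : Sym2 (Fin n) → ℕ) (i : Fin n)
    {u v : Fin n} (h : G.Adj u v) :
    tl0 M G w i u ≤ w (s(u, v)) + tl1 M G w i v :=
  Nat.sInf_le (Set.mem_insert_iff.mpr (Or.inr ⟨v, h, rfl⟩))

lemma tl1_le' (M : ℕ) (G : SimpleGraph (Fin n)) (w : Sym2 (Fin n) → ℕ) (i : Fin n)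
    {u v : Fin n} (h : G.Adj u v) :
    tl1 M G w i u ≤ w (s(u, v)) + tl2 M G w i v :=
  Nat.sInf_le (Set.mem_insert_iff.mpr (Or.inr ⟨v, h, rfl⟩))

lemma tl2_le' (M : ℕ) (G : SimpleGraph (Fin n)) (w : Sym2 (Fin n) → ℕ) (i : Fin n)
    {u v : Fin n} (h : G.Adj u v) :
    tl2 M G w i u ≤ w (s(u, v)) + tl3 M i v :=
  Nat.sInf_le (Set.mem_insert_iff.mpr (Or.inr ⟨v, h, rfl⟩))

lemma D_le_tl0 (M : ℕ) (G : SimpleGraph (Fin n)) (w : Sym2 (Fin n) → ℕ) (i : Fin n)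
    (D : ℕ) (hD3 : D ≤ 3 * M)
    (hDt : ∀ y z, G.Adj i y → G.Adj y z → G.Adj z i →
      D ≤ w (s(i, y)) + w (s(y, z)) + w (s(z, i))) :
    D ≤ tl0 M G w i i := by
  apply le_csInf ⟨3 * M, Set.mem_insert _ _⟩
  intro b hb
  rcases Set.mem_insert_iff.mp hb with rfl | ⟨y, hiy, rfl⟩
  · exact hD3
  have h1 : tl1 M G w i y ∈
      insert (3 * M) {x | ∃ c, G.Adj y c ∧ x = w (s(y, c)) + tl2 M G w i c} := by
    rw [tl1]; exact Nat.sInf_mem ⟨3 * M, Set.mem_insert _ _⟩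
  rcases Set.mem_insert_iff.mp h1 with h1 | ⟨c, hyc, h1⟩
  · rw [h1]; omega
  rw [h1]
  have h2 : tl2 M G w i c ∈
      insert (3 * M) {x | ∃ v, G.Adj c v ∧ x = w (s(c, v)) + tl3 M i v} := by
    rw [tl2]; exact Nat.sInf_mem ⟨3 * M, Set.mem_insert _ _⟩
  rcases Set.mem_insert_iff.mp h2 with h2 | ⟨v, hcv, h2⟩
  · rw [h2]; omega
  rw [h2]
  by_cases hv : v = i
  · subst hv
    have := hDt y c hiy hyc hcv
    simp only [tl3, if_pos rfl]
    omega
  · simp only [tl3, if_neg hv]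
    omega


def rel (G : SimpleGraph (Fin n)) (i : Fin n) :
    ((Fin n × Fin 4) ⊕ Bool) → ((Fin n × Fin 4) ⊕ Bool) → Prop := fun p q =>
  (∃ u v, G.Adj u v ∧ ∃ k : Fin 3,
      p = Sum.inl (u, k.castSucc) ∧ q = Sum.inl (v, k.succ)) ∨
  (∃ j : Fin n, i ≤ j ∧
    (p = Sum.inr false ∧ q = Sum.inl (j, 0) ∨
     p = Sum.inl (j, 3) ∧ q = Sum.inr true))

def cw (M : ℕ) (w : Sym2 (Fin n) → ℕ) :
    ((Fin n × Fin 4) ⊕ Bool) → ((Fin n × Fin 4) ⊕ Bool) → ℕ := fun a b =>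
  match a, b with
  | Sum.inl (u, _), Sum.inl (v, _) => w (s(u, v)) + 2 * M
  | Sum.inr _, Sum.inl (j, _) => 3 * ((j : ℕ) + 1) * M
  | Sum.inl (j, _), Sum.inr _ => 3 * ((j : ℕ) + 1) * M
  | Sum.inr _, Sum.inr _ => 0

noncomputable def pot (M : ℕ) (G : SimpleGraph (Fin n)) (w : Sym2 (Fin n) → ℕ)
    (i : Fin n) (D : ℕ) : (Fin n × Fin 4) ⊕ Bool → ℕ
  | Sum.inr true => 0
  | Sum.inr false => 6 * ((i : ℕ) + 1) * M + 6 * M + D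
  | Sum.inl (v, k) =>
      if k = 3 then 3 * ((i : ℕ) + 1) * M + tl3 M i v
      else if k = 2 then 3 * ((i : ℕ) + 1) * M + 2 * M + tl2 M G w i v
      else if k = 1 then 3 * ((i : ℕ) + 1) * M + 4 * M + tl1 M G w i v
      else 3 * ((i : ℕ) + 1) * M + 6 * M + tl0 M G w i v

lemma mul_mono (m : ℕ) {a b : ℕ} (h : a ≤ b) : 3 * (a + 1) * m ≤ 3 * (b + 1) * m :=
  Nat.mul_le_mul_right m (by omega)

lemma pot_step (M : ℕ) (G : SimpleGraph (Fin n)) (w : Sym2 (Fin n) → ℕ)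
    (i : Fin n) (D : ℕ) (hD3 : D ≤ 3 * M) (hDi : D ≤ tl0 M G w i i)
    {a b : (Fin n × Fin 4) ⊕ Bool}
    (h : (SimpleGraph.fromRel (rel G i)).Adj a b) :
    pot M G w i D a ≤ cw M w a b + pot M G w i D b := by
  rw [SimpleGraph.fromRel_adj] at h
  obtain ⟨hne, h | h⟩ := h
  · obtain ⟨u, v, huv, k, rfl, rfl⟩ | ⟨j, hij, ⟨rfl, rfl⟩ | ⟨rfl, rfl⟩⟩ := h
    · fin_cases k
      · have h1 := tl0_le' M G w i huv
        simp (config := { decide := true }) only [pot, cw, ite_true, ite_false]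
        linarith
      · have h1 := tl1_le' M G w i huv
        simp (config := { decide := true }) only [pot, cw, ite_true, ite_false]
        linarith
      · have h1 := tl2_le' M G w i huv
        simp (config := { decide := true }) only [pot, cw, ite_true, ite_false]
        linarith
    · -- s to (j,0)
      have hij' : (i : ℕ) ≤ j := hij
      simp (config := { decide := true }) only [pot, cw, ite_true, ite_false]
      rcases eq_or_lt_of_le hij' with heq | hlt
      · have : tl0 M G w i j = tl0 M G w i i := by
          congr 1; exact Fin.ext heq.symm
        rw [this]
        have hm := mul_mono M hij'
        linarith
      · have hm : 3 * ((i : ℕ) + 1 + 1) * M ≤ 3 * ((j : ℕ) + 1) * M :=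
          Nat.mul_le_mul_right M (by omega)
        have hr : 3 * ((i : ℕ) + 1 + 1) * M = 3 * ((i : ℕ) + 1) * M + 3 * M := by ring
        linarith
    · -- (j,3) to t
      have hij' : (i : ℕ) ≤ j := hij
      simp (config := { decide := true }) only [pot, cw, ite_true, ite_false]
      by_cases hji : j = i
      · subst hji
        simp [tl3]
      · have hlt : (i : ℕ) < j := lt_of_le_of_ne hij' (fun hc => hji (Fin.ext hc.symm))
        have hm : 3 * ((i : ℕ) + 1 + 1) * M ≤ 3 * ((j : ℕ) + 1) * M :=
          Nat.mul_le_mul_right M (by omega)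
        have hr : 3 * ((i : ℕ) + 1 + 1) * M = 3 * ((i : ℕ) + 1) * M + 3 * M := by ring
        simp only [tl3, if_neg hji]
        linarith
  · obtain ⟨u, v, huv, k, rfl, rfl⟩ | ⟨j, hij, ⟨rfl, rfl⟩ | ⟨rfl, rfl⟩⟩ := h
    · fin_cases k
      · have h1 := tl1_le M G w i v
        simp (config := { decide := true }) only [pot, cw, ite_true, ite_false]
        linarith
      · have h1 := tl2_le M G w i v
        simp (config := { decide := true }) only [pot, cw, ite_true, ite_false]
        linarith
      · have h1 := tl3_le M i v
        simp (config := { decide := true }) only [pot, cw, ite_true, ite_false]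
        linarith
    · -- (j,0) to s
      have hij' : (i : ℕ) ≤ j := hij
      have h1 := tl0_le M G w i j
      have hm : 3 * M ≤ 3 * ((j : ℕ) + 1) * M := by
        calc 3 * M = 3 * (0 + 1) * M := by ring
        _ ≤ _ := Nat.mul_le_mul_right M (by omega)
      have hm2 : 3 * ((i : ℕ) + 1) * M ≤ 6 * ((i : ℕ) + 1) * M :=
        Nat.mul_le_mul_right M (by omega)
      simp (config := { decide := true }) only [pot, cw, ite_true, ite_false]
      linarith [hm, hm2, h1]
    · -- t to (j,3)
      simp only [pot, cw]
      exact Nat.zero_le _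

lemma walk_lb (M : ℕ) (G : SimpleGraph (Fin n)) (w : Sym2 (Fin n) → ℕ)
    (i : Fin n) (D : ℕ) (hD3 : D ≤ 3 * M) (hDi : D ≤ tl0 M G w i i) :
    ∀ {a b : (Fin n × Fin 4) ⊕ Bool} (p : (SimpleGraph.fromRel (rel G i)).Walk a b),
      b = Sum.inr true →
      pot M G w i D a ≤ (p.darts.map (fun d => cw M w d.toProd.1 d.toProd.2)).sum := by
  intro a b p
  induction p with
  | nil => rintro rfl; simp [pot]
  | cons h q ih =>
      intro hb
      simp only [SimpleGraph.Walk.darts_cons, List.map_cons, List.sum_cons]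
      calc pot M G w i D _ ≤ cw M w _ _ + pot M G w i D _ := pot_step M G w i D hD3 hDi h
      _ ≤ _ := Nat.add_le_add_left (ih hb) _

end Stmt15

open Stmt15 in
theorem stmt_15 (n M : ℕ) (G : SimpleGraph (Fin n)) (w : Sym2 (Fin n) → ℕ)
    (hw : ∀ e ∈ G.edgeSet, 1 ≤ w e ∧ w e ≤ M) (i : Fin n)
    (htri : ∃ y z, G.Adj i y ∧ G.Adj y z ∧ G.Adj z i) :
    let W := (Fin n × Fin 4) ⊕ Bool
    let H : SimpleGraph W := SimpleGraph.fromRel (fun p q =>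
      (∃ u v, G.Adj u v ∧ ∃ k : Fin 3,
          p = Sum.inl (u, k.castSucc) ∧ q = Sum.inl (v, k.succ)) ∨
      (∃ j : Fin n, i ≤ j ∧
        (p = Sum.inr false ∧ q = Sum.inl (j, 0) ∨
         p = Sum.inl (j, 3) ∧ q = Sum.inr true)))
    let cW : W → W → ℕ := fun a b =>
      match a, b with
      | Sum.inl (u, _), Sum.inl (v, _) => w (s(u, v)) + 2 * M
      | Sum.inr _, Sum.inl (j, _) => 3 * ((j : ℕ) + 1) * M
      | Sum.inl (j, _), Sum.inr _ => 3 * ((j : ℕ) + 1) * M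
      | _, _ => 0
    IsLeast {x : ℕ | ∃ p : H.Walk (Sum.inr false) (Sum.inr true),
        (p.darts.map (fun d => cW d.toProd.1 d.toProd.2)).sum = x}
      ((6 * ((i : ℕ) + 1) + 6) * M +
        sInf {x : ℕ | ∃ y z, G.Adj i y ∧ G.Adj y z ∧ G.Adj z i ∧
          x = w (s(i, y)) + w (s(y, z)) + w (s(z, i))}) := by
  intro W H cW
  set Tset := {x : ℕ | ∃ y z, G.Adj i y ∧ G.Adj y z ∧ G.Adj z i ∧
      x = w (s(i, y)) + w (s(y, z)) + w (s(z, i))} with hTset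
  have hTne : Tset.Nonempty := by
    obtain ⟨y, z, h1, h2, h3⟩ := htri
    exact ⟨_, y, z, h1, h2, h3, rfl⟩
  obtain ⟨y, z, hiy, hyz, hzi, hD⟩ := Nat.sInf_mem hTne
  have hD3 : sInf Tset ≤ 3 * M := by
    have w1 := (hw _ (G.mem_edgeSet.mpr hiy)).2
    have w2 := (hw _ (G.mem_edgeSet.mpr hyz)).2
    have w3 := (hw _ (G.mem_edgeSet.mpr hzi)).2
    omega
  have hDt : ∀ y z, G.Adj i y → G.Adj y z → G.Adj z i →
      sInf Tset ≤ w (s(i, y)) + w (s(y, z)) + w (s(z, i)) :=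
    fun y z h1 h2 h3 => Nat.sInf_le ⟨y, z, h1, h2, h3, rfl⟩
  have hDi : sInf Tset ≤ tl0 M G w i i := D_le_tl0 M G w i _ hD3 hDt
  constructor
  · -- membership: explicit walk s → (i,0) → (y,1) → (z,2) → (i,3) → t
    have h1 : H.Adj (Sum.inr false) (Sum.inl (i, 0)) :=
      (SimpleGraph.fromRel_adj _ _ _).mpr ⟨by simp,
        Or.inl (Or.inr ⟨i, le_refl i, Or.inl ⟨rfl, rfl⟩⟩)⟩
    have h2 : H.Adj (Sum.inl (i, 0)) (Sum.inl (y, 1)) :=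
      (SimpleGraph.fromRel_adj _ _ _).mpr ⟨(by intro hc; injection hc with h; injection h with h1 h2; exact absurd h2 (by decide)),
        Or.inl (Or.inl ⟨i, y, hiy, 0, rfl, rfl⟩)⟩
    have h3 : H.Adj (Sum.inl (y, 1)) (Sum.inl (z, 2)) :=
      (SimpleGraph.fromRel_adj _ _ _).mpr ⟨(by intro hc; injection hc with h; injection h with h1 h2; exact absurd h2 (by decide)),
        Or.inl (Or.inl ⟨y, z, hyz, 1, rfl, rfl⟩)⟩
    have h4 : H.Adj (Sum.inl (z, 2)) (Sum.inl (i, 3)) :=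
      (SimpleGraph.fromRel_adj _ _ _).mpr ⟨(by intro hc; injection hc with h; injection h with h1 h2; exact absurd h2 (by decide)),
        Or.inl (Or.inl ⟨z, i, hzi, 2, rfl, rfl⟩)⟩
    have h5 : H.Adj (Sum.inl (i, 3)) (Sum.inr true) :=
      (SimpleGraph.fromRel_adj _ _ _).mpr ⟨by simp,
        Or.inl (Or.inr ⟨i, le_refl i, Or.inr ⟨rfl, rfl⟩⟩)⟩
    refine ⟨SimpleGraph.Walk.cons h1 (SimpleGraph.Walk.cons h2 (SimpleGraph.Walk.cons h3
      (SimpleGraph.Walk.cons h4 (SimpleGraph.Walk.cons h5 SimpleGraph.Walk.nil)))), ?_⟩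
    simp only [SimpleGraph.Walk.darts_cons, SimpleGraph.Walk.darts_nil, List.map_cons,
      List.map_nil, List.sum_cons, List.sum_nil]
    show 3 * ((i : ℕ) + 1) * M + (w (s(i, y)) + 2 * M + (w (s(y, z)) + 2 * M +
      (w (s(z, i)) + 2 * M + (3 * ((i : ℕ) + 1) * M + 0)))) =
      (6 * ((i : ℕ) + 1) + 6) * M + sInf Tset
    rw [hD]
    ring
  · rintro x ⟨p, rfl⟩
    have key := walk_lb M G w i (sInf Tset) hD3 hDi p rfl
    have hpot : pot M G w i (sInf Tset) (Sum.inr false) =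
        (6 * ((i : ℕ) + 1) + 6) * M + sInf Tset := by
      simp only [pot]; ring
    rw [hpot] at key
    have hc : ∀ a b, cW a b = cw M w a b := by
      rintro (⟨u, k⟩ | x) (⟨v, l⟩ | y) <;> rfl
    refine le_trans key (le_of_eq ?_)
    congr 1; congr 1; funext d; exact (hc _ _).symm
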